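/- (Characterization of the need-adjusted balanced-transfer rule) A rule φ on linear hierarchy problems with needs satisfies lowest rank consistency, highest rank independence, highest rank splitting neutrality, and canonical bilateral fairness if and only if φ = φ^{1/2}, the need-adjusted geometric rule with λ = 1/2. -/

import Mathlib

/-- The need-adjusted geometric rule with parameter `lam` on the hierarchy
`{0, ..., m-1}` (agent `m-1` is the top-ranked agent). -/
noncomputable def geomRule (lam : ℝ) (m : ℕ) (r z : ℕ → ℝ) (i : ℕ) : ℝ :=
  if i + 1 < m then
    z i + lam * ∑ j ∈ Finset.range (i + 1), (1 - lam) ^ (i - j) * (r j - z j)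
  else
    r i + ∑ j ∈ Finset.range (m - 1), (1 - lam) ^ (m - 1 - j) * (r j - z j)

/-- A valid linear hierarchy problem with needs: at least one agent,
nonnegative needs, and each agent's need is covered by his own revenue. -/
def Valid (m : ℕ) (r z : ℕ → ℝ) : Prop :=
  0 < m ∧ ∀ i < m, 0 ≤ z i ∧ z i ≤ r i
lemma keyE (d dh : ℕ → ℝ) (h0 : dh 0 = d 1 + d 0 / 2)
    (hk : ∀ j, 1 ≤ j → dh j = d (j + 1)) :
    ∀ n, 1 ≤ n → ∀ e : ℕ,
      ∑ j ∈ Finset.range n, (1/2 : ℝ) ^ (e + (n - 1 - j)) * dh j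
        = ∑ k ∈ Finset.range (n + 1), (1/2 : ℝ) ^ (e + (n - k)) * d k := by
  intro n hn
  induction n, hn using Nat.le_induction with
  | base =>
    intro e
    simp [Finset.sum_range_succ, h0, pow_succ]
    ring
  | succ n hn ih =>
    intro e
    rw [Finset.sum_range_succ, Finset.sum_range_succ]
    have h1 : ∑ j ∈ Finset.range n, (1/2:ℝ)^(e + (n+1-1-j)) * dh j
        = ∑ j ∈ Finset.range n, (1/2:ℝ)^((e+1) + (n-1-j)) * dh j := by
      refine Finset.sum_congr rfl fun j hj => ?_
      simp only [Finset.mem_range] at hj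
      congr 2
      omega
    rw [h1, ih (e+1), hk n hn]
    have h2 : ∑ k ∈ Finset.range (n+1), (1/2:ℝ)^((e+1)+(n-k)) * d k
        = ∑ k ∈ Finset.range (n+1), (1/2:ℝ)^(e+(n+1-k)) * d k := by
      refine Finset.sum_congr rfl fun k hk' => ?_
      simp only [Finset.mem_range] at hk'
      congr 2
      omega
    rw [h2]
    have h3 : e + (n+1-1-n) = e := by omega
    have h4 : e + (n+1-(n+1)) = e := by omega
    rw [h3, h4]

lemma geom_shift (m : ℕ) (hm : 2 ≤ m) (r z : ℕ → ℝ) (c : ℝ)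
    (hc : c = z 0 + (r 0 - z 0) / 2)
    (i : ℕ) (h1 : 1 ≤ i) (him : i < m) :
    geomRule (1/2) (m - 1)
        (fun j => if j = 0 then r 1 + r 0 - c else r (j + 1))
        (fun j => z (j + 1)) (i - 1)
      = geomRule (1/2) m r z i := by
  have hhalf : (1:ℝ) - 1/2 = 1/2 := by norm_num
  set d : ℕ → ℝ := fun j => r j - z j with hd
  set dh : ℕ → ℝ := fun j => (if j = 0 then r 1 + r 0 - c else r (j + 1)) - z (j + 1) with hdh
  have h0 : dh 0 = d 1 + d 0 / 2 := by simp [hdh, hd, hc]; ring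
  have hk : ∀ j, 1 ≤ j → dh j = d (j + 1) := by
    intro j hj
    simp [hdh, hd, Nat.one_le_iff_ne_zero.mp hj]
  rcases lt_or_eq_of_le (Nat.succ_le_of_lt him) with hcase | hcase
  · -- i + 1 < m : both take the if branch
    have hA : i - 1 + 1 < m - 1 := by omega
    have hB : i + 1 < m := by omega
    rw [geomRule, if_pos hA, geomRule, if_pos hB, hhalf]
    have hi1 : i - 1 + 1 = i := by omega
    rw [hi1]
    congr 1
    congr 1
    have := keyE d dh h0 hk i h1 0
    calc ∑ j ∈ Finset.range i, (1/2:ℝ)^(i-1-j) * ((if j = 0 then r 1 + r 0 - c else r (j + 1)) - z (j+1))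
        = ∑ j ∈ Finset.range i, (1/2:ℝ)^(0+(i-1-j)) * dh j := by
          refine Finset.sum_congr rfl fun j hj => ?_
          simp [hdh]
      _ = ∑ k ∈ Finset.range (i+1), (1/2:ℝ)^(0+(i-k)) * d k := this
      _ = ∑ k ∈ Finset.range (i+1), (1/2:ℝ)^(i-k) * (r k - z k) := by
          refine Finset.sum_congr rfl fun k hk' => ?_
          simp [hd]
  · -- i + 1 = m : top agent
    have hi : i = m - 1 := by omega
    have hA : ¬ (i - 1 + 1 < m - 1) := by omega
    have hB : ¬ (i + 1 < m) := by omega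
    rw [geomRule, if_neg hA, geomRule, if_neg hB, hhalf]
    rcases Nat.lt_or_ge m 3 with hm2 | hm3
    · -- m = 2, i = 1
      have hm' : m = 2 := by omega
      have hi' : i = 1 := by omega
      subst hm' hi'
      simp [Finset.sum_range_one, hc]
      ring
    · -- m ≥ 3
      have hne : i - 1 ≠ 0 := by omega
      rw [if_neg hne]
      have hii : i - 1 + 1 = i := by omega
      rw [hii]
      congr 1
      have hn1 : 1 ≤ m - 2 := by omega
      have := keyE d dh h0 hk (m - 2) hn1 1
      calc ∑ j ∈ Finset.range (m - 1 - 1), (1/2:ℝ)^(m-1-1-j) * ((if j = 0 then r 1 + r 0 - c else r (j + 1)) - z (j+1))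
          = ∑ j ∈ Finset.range (m-2), (1/2:ℝ)^(1+(m-2-1-j)) * dh j := by
            have : m - 1 - 1 = m - 2 := by omega
            rw [this]
            refine Finset.sum_congr rfl fun j hj => ?_
            simp only [Finset.mem_range] at hj
            have : m - 2 - j = 1 + (m - 2 - 1 - j) := by omega
            rw [this]
        _ = ∑ k ∈ Finset.range (m-2+1), (1/2:ℝ)^(1+(m-2-k)) * d k := this
        _ = ∑ k ∈ Finset.range (m-1), (1/2:ℝ)^(m-1-k) * (r k - z k) := by
            have : m - 2 + 1 = m - 1 := by omega
            rw [this]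
            refine Finset.sum_congr rfl fun k hk' => ?_
            simp only [Finset.mem_range] at hk'
            have : m - 1 - k = 1 + (m - 2 - k) := by omega
            rw [this]

theorem characterization_need_adjusted_balanced_transfer_rule
    (φ : ℕ → (ℕ → ℝ) → (ℕ → ℝ) → ℕ → ℝ)
    -- φ is a rule: nonnegative allocations satisfying balance
    (hrule : ∀ m r z, Valid m r z →
      (∀ i < m, 0 ≤ φ m r z i) ∧
      ∑ i ∈ Finset.range m, φ m r z i = ∑ i ∈ Finset.range m, r i) :
    -- lowest rank consistency, highest rank independence,
    -- highest rank splitting neutrality, and canonical bilateral fairness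
    ((∀ m r z, Valid m r z → 2 ≤ m →
        Valid (m - 1)
          (fun j => if j = 0 then r 1 + r 0 - φ m r z 0 else r (j + 1))
          (fun j => z (j + 1)) →
        ∀ i, 1 ≤ i → i < m →
          φ m r z i =
            φ (m - 1)
              (fun j => if j = 0 then r 1 + r 0 - φ m r z 0 else r (j + 1))
              (fun j => z (j + 1)) (i - 1)) ∧
     (∀ m r z r' z', Valid m r z → Valid m r' z' →
        (∀ i, i + 1 < m → r i = r' i ∧ z i = z' i) →
        ∀ i, i + 1 < m → φ m r z i = φ m r' z' i) ∧
     (∀ m r z r' z', Valid m r z → Valid (m + 1) r' z' →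
        (∀ j, j + 1 < m → r' j = r j ∧ z' j = z j) →
        r' (m - 1) + r' m = r (m - 1) →
        z' (m - 1) + z' m = z (m - 1) →
        ∀ i, i + 1 < m → φ (m + 1) r' z' i = φ m r z i) ∧
     (∀ r₁ z₁ : ℝ, 0 ≤ z₁ → z₁ ≤ r₁ →
        φ 2 (fun j => if j = 0 then r₁ else 0) (fun j => if j = 0 then z₁ else 0) 0
            = z₁ + (r₁ - z₁) / 2 ∧
        φ 2 (fun j => if j = 0 then r₁ else 0) (fun j => if j = 0 then z₁ else 0) 1
            = (r₁ - z₁) / 2))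
    ↔
    (∀ m r z, Valid m r z → ∀ i < m, φ m r z i = geomRule (1/2) m r z i) := by
  constructor
  · rintro ⟨hLRC, hHRI, hHRSN, hCBF⟩
    intro m
    induction m using Nat.strong_induction_on with
    | _ m IH =>
    intro r z hv i hi
    rcases m with _ | _ | _ | n
    · omega
    · -- m = 1
      have hi0 : i = 0 := by omega
      subst hi0
      have hbal := (hrule 1 r z hv).2
      simp only [Finset.sum_range_one] at hbal
      rw [geomRule]
      norm_num
      exact hbal
    · -- m = 2
      show φ 2 r z i = geomRule (1/2) 2 r z i
      have h00 := hv.2 0 (by omega)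
      have hφ0 : φ 2 r z 0 = z 0 + (r 0 - z 0)/2 := by
        have hv' : Valid 2 (fun j => if j = 0 then r 0 else 0)
            (fun j => if j = 0 then z 0 else 0) := by
          refine ⟨by omega, fun j hj => ?_⟩
          interval_cases j <;> simp [h00.1, h00.2]
        have hag : ∀ i, i + 1 < 2 → r i = (fun j => if j = 0 then r 0 else 0) i ∧
            z i = (fun j => if j = 0 then z 0 else 0) i := by
          intro i hi
          have : i = 0 := by omega
          subst this
          simp
        have e := hHRI 2 r z _ _ hv hv' hag 0 (by omega)
        rw [e, (hCBF (r 0) (z 0) h00.1 h00.2).1]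
      have hbal := (hrule 2 r z hv).2
      simp only [Finset.sum_range_succ, Finset.sum_range_zero, zero_add] at hbal
      interval_cases i
      · rw [hφ0, geomRule, if_pos (by norm_num)]
        norm_num [Finset.sum_range_one]
        ring
      · rw [geomRule, if_neg (by norm_num)]
        norm_num [Finset.sum_range_one]
        linarith
    · -- m = n + 3
      show φ (n+3) r z i = geomRule (1/2) (n+3) r z i
      have hφ0 : φ (n+3) r z 0 = z 0 + (r 0 - z 0)/2 := by
        set rt : ℕ → ℝ := fun j => if j = n+1 then r (n+1) + r (n+2) else r j with hrt
        set zt : ℕ → ℝ := fun j => if j = n+1 then z (n+1) + z (n+2) else z j with hzt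
        have hvt : Valid (n+2) rt zt := by
          refine ⟨by omega, fun j hj => ?_⟩
          by_cases h : j = n+1
          · subst h
            have ha := hv.2 (n+1) (by omega)
            have hb := hv.2 (n+2) (by omega)
            simp only [hrt, hzt, if_pos rfl]
            constructor
            · linarith [ha.1, hb.1]
            · linarith [ha.2, hb.2]
          · simp only [hrt, hzt, if_neg h]
            exact hv.2 j (by omega)
        have hag : ∀ j, j + 1 < n + 2 → r j = rt j ∧ z j = zt j := by
          intro j hj
          have h : j ≠ n+1 := by omega
          simp [hrt, hzt, h]
        have hr : r (n+2-1) + r (n+2) = rt (n+2-1) := by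
          simp [hrt]
        have hz : z (n+2-1) + z (n+2) = zt (n+2-1) := by
          simp [hzt]
        have e1 := hHRSN (n+2) rt zt r z hvt hv hag hr hz 0 (by omega)
        have e2 := IH (n+2) (by omega) rt zt hvt 0 (by omega)
        rw [e1, e2, geomRule, if_pos (by omega : 0+1 < n+2)]
        have hr0 : rt 0 = r 0 := by
          simp only [hrt]
          rw [if_neg (by omega : ¬ (0 = n+1))]
        have hz0 : zt 0 = z 0 := by
          simp only [hzt]
          rw [if_neg (by omega : ¬ (0 = n+1))]
        rw [Finset.sum_range_one, hr0, hz0]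
        norm_num
        ring
      rcases Nat.eq_zero_or_pos i with h0 | h1
      · subst h0
        rw [hφ0, geomRule, if_pos (by omega : 0+1 < n+3), Finset.sum_range_one]
        norm_num
        ring
      · set rh : ℕ → ℝ := fun j => if j = 0 then r 1 + r 0 - φ (n+3) r z 0 else r (j+1) with hrh
        have hvr : Valid (n+2) rh (fun j => z (j+1)) := by
          refine ⟨by omega, fun j hj => ?_⟩
          rcases Nat.eq_zero_or_pos j with h | h
          · subst h
            have ha := hv.2 0 (by omega)
            have hb := hv.2 1 (by omega)
            simp only [hrh, if_pos rfl, hφ0]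
            constructor
            · exact hb.1
            · linarith [ha.2, hb.2]
          · have := hv.2 (j+1) (by omega)
            have hne : j ≠ 0 := by omega
            simpa [hrh, hne] using this
        have h32 : n + 3 - 1 = n + 2 := by omega
        have eL := hLRC (n+3) r z hv (by omega) (by rw [h32]; exact hvr) i h1 (by omega)
        rw [h32] at eL
        have eIH := IH (n+2) (by omega) rh (fun j => z (j+1)) hvr (i-1) (by omega)
        have gs := geom_shift (n+3) (by omega) r z (φ (n+3) r z 0) hφ0 i h1 (by omega)
        rw [h32] at gs
        rw [eL, eIH]
        exact gs
  · intro heq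
    refine ⟨?_, ?_, ?_, ?_⟩
    · -- LRC
      intro m r z hv hm2 hvr i h1 him
      have hφ0 : φ m r z 0 = z 0 + (r 0 - z 0)/2 := by
        rw [heq m r z hv 0 (by omega), geomRule, if_pos (by omega : 0+1 < m),
          Finset.sum_range_one]
        norm_num
        ring
      rw [heq m r z hv i him, heq (m-1) _ _ hvr (i-1) (by omega)]
      simp only [hφ0]
      have hc : z 0 + (r 0 - z 0)/2 = z 0 + (r 0 - z 0)/2 := rfl
      exact (geom_shift m hm2 r z _ hc i h1 him).symm
    · -- HRI
      intro m r z r' z' hv hv' hag i hi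
      rw [heq m r z hv i (by omega), heq m r' z' hv' i (by omega)]
      rw [geomRule, if_pos hi, geomRule, if_pos hi, (hag i hi).2]
      congr 2
      refine Finset.sum_congr rfl fun j hj => ?_
      simp only [Finset.mem_range] at hj
      rw [(hag j (by omega)).1, (hag j (by omega)).2]
    · -- HRSN
      intro m r z r' z' hv hv' hag hr hz i hi
      rw [heq (m+1) r' z' hv' i (by omega), heq m r z hv i (by omega)]
      rw [geomRule, if_pos (by omega : i+1 < m+1), geomRule, if_pos hi, (hag i hi).2]
      congr 2
      refine Finset.sum_congr rfl fun j hj => ?_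
      simp only [Finset.mem_range] at hj
      rw [(hag j (by omega)).1, (hag j (by omega)).2]
    · -- CBF
      intro r1 z1 h0 h1
      have hv2 : Valid 2 (fun j => if j = 0 then r1 else 0)
          (fun j => if j = 0 then z1 else 0) := by
        refine ⟨by omega, fun j hj => ?_⟩
        interval_cases j <;> simp [h0, h1]
      constructor
      · rw [heq 2 _ _ hv2 0 (by omega), geomRule, if_pos (by norm_num),
          Finset.sum_range_one]
        norm_num
        ring
      · rw [heq 2 _ _ hv2 1 (by omega), geomRule, if_neg (by norm_num),
          Finset.sum_range_one]
        norm_num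
        ring
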